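/- For every nonnegative integer k and every real z > 0, the modified Bessel function of the first kind satisfies z^{-k} I_k(z) ≤ sqrt(π/8) · (k² + z²)^{-1/4} · (k + sqrt(k² + z²))^{-k} · exp(sqrt(k² + z²)). -/

import Mathlib

set_option maxHeartbeats 1000000
open Real MeasureTheory Complex

noncomputable def bterm (a b : ℝ) (k : ℕ) (pq : ℕ × ℕ) (θ : ℝ) : ℂ :=
  ((a ^ pq.1 / pq.1.factorial * (b ^ pq.2 / pq.2.factorial) : ℝ) : ℂ) *
    Complex.exp ((((pq.1 : ℤ) - pq.2 - k : ℤ) : ℂ) * θ * I)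

-- pointwise expansion
lemma pointwise_expansion (a b : ℝ) (k : ℕ) (θ : ℝ) :
    Complex.exp (a * Complex.exp (θ * I) + b * Complex.exp (-(θ * I)) - k * θ * I)
      = ∑' pq : ℕ × ℕ, bterm a b k pq θ := by
  have hexp : ∀ w : ℂ, Complex.exp w = ∑' n : ℕ, w ^ n / n.factorial := by
    intro w
    rw [Complex.exp_eq_exp_ℂ, NormedSpace.exp_eq_tsum_div]
  have hS : ∀ w : ℂ, Summable fun n : ℕ => ‖w ^ n / (n.factorial : ℂ)‖ := by
    intro w
    have : ∀ n : ℕ, ‖w ^ n / (n.factorial : ℂ)‖ = ‖w‖ ^ n / n.factorial := by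
      intro n
      rw [norm_div, norm_pow]
      norm_num
    simp_rw [this]
    exact Real.summable_pow_div_factorial _
  rw [sub_eq_add_neg, Complex.exp_add, Complex.exp_add, hexp (↑a * Complex.exp (θ * I)),
    hexp (↑b * Complex.exp (-(θ * I))),
    tsum_mul_tsum_of_summable_norm (hS _) (hS _), ← tsum_mul_right]
  apply tsum_congr
  rintro ⟨p, q⟩
  have he : Complex.exp (θ * I) ^ p * (Complex.exp (-(θ * I)) ^ q * Complex.exp (-(↑k * ↑θ * I)))
      = Complex.exp ((((p : ℤ) - q - k : ℤ) : ℂ) * θ * I) := by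
    rw [← Complex.exp_nat_mul, ← Complex.exp_nat_mul, ← Complex.exp_add, ← Complex.exp_add]
    congr 1
    push_cast
    ring
  simp only [bterm]
  push_cast at he ⊢
  rw [mul_pow, mul_pow]
  rw [← he]
  ring

lemma integral_exp_int (n : ℤ) :
    (∫ θ in (-π)..π, Complex.exp ((n : ℂ) * θ * I)) = if n = 0 then (2 * π : ℂ) else 0 := by
  rcases eq_or_ne n 0 with rfl | hn
  · simp
    norm_num
    push_cast
    ring
  · rw [if_neg hn]
    have h1 : ∀ θ : ℝ, (n : ℂ) * θ * I = ((n : ℂ) * I) * θ := fun θ => by ring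
    simp_rw [h1]
    rw [integral_exp_mul_complex (by simp [hn, Complex.I_ne_zero])]
    have h2 : ∀ x : ℝ, (n : ℂ) * I * x = (x : ℂ) * I * n := fun x => by push_cast; ring
    have h3 : Complex.exp ((n:ℂ) * I * (π:ℝ)) = (-1 : ℂ) ^ n := by
      rw [show (n:ℂ) * I * (π:ℝ) = n * (π * I) by push_cast; ring, Complex.exp_int_mul,
        Complex.exp_pi_mul_I]
    have h4 : Complex.exp ((n:ℂ) * I * ((-π:ℝ):ℂ)) = (-1 : ℂ) ^ n := by
      rw [show (n:ℂ) * I * ((-π:ℝ):ℂ) = ((-n : ℤ) : ℂ) * (π * I) by push_cast; ring, Complex.exp_int_mul,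
        Complex.exp_pi_mul_I, zpow_neg, ← inv_zpow, inv_neg_one]
    rw [h3, h4]
    simp

lemma key_integral (a b : ℝ) (ha : 0 ≤ a) (hb : 0 ≤ b) (k : ℕ) :
    (∫ θ in (-π)..π,
        Complex.exp (a * Complex.exp (θ * I) + b * Complex.exp (-(θ * I)) - k * θ * I))
      = ((2 * π : ℝ) : ℂ) *
        ((∑' q : ℕ, a ^ (q + k) * b ^ q / ((q + k).factorial * q.factorial) : ℝ) : ℂ) := by
  have hle : (-π : ℝ) ≤ π := by linarith [pi_pos]
  have hcont : ∀ pq : ℕ × ℕ, Continuous (bterm a b k pq) := by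
    intro pq
    apply continuous_const.mul
    apply Complex.continuous_exp.comp
    exact (continuous_const.mul Complex.continuous_ofReal).mul continuous_const
  have hnorm : ∀ pq : ℕ × ℕ, ∀ θ : ℝ, ‖bterm a b k pq θ‖
      = a ^ pq.1 / pq.1.factorial * (b ^ pq.2 / pq.2.factorial) := by
    rintro ⟨p, q⟩ θ
    have : (((p : ℤ) - q - k : ℤ) : ℂ) * θ * I = ((((p : ℤ) - q - k : ℤ) * θ : ℝ) : ℂ) * I := by
      push_cast; ring
    rw [bterm, norm_mul, this]
    rw [Complex.norm_exp_ofReal_mul_I, mul_one,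
      Complex.norm_real, Real.norm_eq_abs]
    exact abs_of_nonneg (by positivity)
  have hint : ∀ pq : ℕ × ℕ, Integrable (bterm a b k pq) (volume.restrict (Set.Ioc (-π) π)) :=
    fun pq => (hcont pq).integrableOn_Ioc
  have hsum : Summable fun pq : ℕ × ℕ =>
      ∫ θ in Set.Ioc (-π) π, ‖bterm a b k pq θ‖ := by
    have : ∀ pq : ℕ × ℕ, (∫ θ in Set.Ioc (-π) π, ‖bterm a b k pq θ‖)
        = (2 * π) * (a ^ pq.1 / pq.1.factorial * (b ^ pq.2 / pq.2.factorial)) := by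
      intro pq
      simp_rw [hnorm pq]
      rw [setIntegral_const, measureReal_def, Real.volume_Ioc, smul_eq_mul]
      rw [ENNReal.toReal_ofReal (by linarith)]
      ring_nf
    simp_rw [this]
    apply Summable.mul_left
    have hf : Summable fun p : ℕ => ‖a ^ p / (p.factorial : ℝ)‖ := by
      simp_rw [norm_div, norm_pow, Real.norm_natCast]
      exact_mod_cast Real.summable_pow_div_factorial ‖a‖
    have hg : Summable fun q : ℕ => ‖b ^ q / (q.factorial : ℝ)‖ := by
      simp_rw [norm_div, norm_pow, Real.norm_natCast]
      exact_mod_cast Real.summable_pow_div_factorial ‖b‖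
    exact summable_mul_of_summable_norm hf hg
  calc (∫ θ in (-π)..π,
        Complex.exp (a * Complex.exp (θ * I) + b * Complex.exp (-(θ * I)) - k * θ * I))
      = ∫ θ in Set.Ioc (-π) π, ∑' pq : ℕ × ℕ, bterm a b k pq θ := by
        rw [intervalIntegral.integral_of_le hle]
        congr 1
        ext θ
        exact pointwise_expansion a b k θ
    _ = ∑' pq : ℕ × ℕ, ∫ θ in Set.Ioc (-π) π, bterm a b k pq θ :=
        (MeasureTheory.integral_tsum_of_summable_integral_norm hint hsum).symm
    _ = ∑' pq : ℕ × ℕ, (if pq.1 = pq.2 + k then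
          ((a ^ pq.1 / pq.1.factorial * (b ^ pq.2 / pq.2.factorial) : ℝ) : ℂ) * ((2 * π : ℝ) : ℂ)
        else 0) := by
        apply tsum_congr
        rintro ⟨p, q⟩
        rw [← intervalIntegral.integral_of_le hle]
        simp only [bterm]
        rw [intervalIntegral.integral_const_mul, integral_exp_int]
        have hcond : ((p : ℤ) - q - k = 0) ↔ (p = q + k) := by omega
        by_cases h : p = q + k
        · rw [if_pos (hcond.2 h), if_pos h]
          push_cast
          ring
        · rw [if_neg (fun hh => h (hcond.1 hh)), if_neg h, mul_zero]
    _ = ((2 * π : ℝ) : ℂ) *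
        ((∑' q : ℕ, a ^ (q + k) * b ^ q / ((q + k).factorial * q.factorial) : ℝ) : ℂ) := by
        have hinj : Function.Injective (fun q : ℕ => ((q + k, q) : ℕ × ℕ)) := by
          intro x y hxy
          simpa using congrArg Prod.snd hxy
        rw [← Function.Injective.tsum_eq hinj]
        · simp only []
          rw [Complex.ofReal_tsum, ← tsum_mul_left]
          apply tsum_congr
          intro q
          simp only [if_true]
          push_cast
          ring
        · intro pq hpq
          simp only [Function.mem_support] at hpq
          by_cases h : pq.1 = pq.2 + k
          · exact ⟨pq.2, by simp [← h]⟩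
          · exact absurd (if_neg h) hpq


-- test piece 1: Gaussian bound lemma
lemma integral_exp_cos_le (s : ℝ) (hs : 0 < s) :
    ∫ θ in (-π)..π, Real.exp (s * Real.cos θ) ≤ Real.exp s * (π * Real.sqrt (π / (2 * s))) := by
  have hc : 0 < 2 * s / π ^ 2 := by positivity
  have step1 : ∫ θ in (-π)..π, Real.exp (s * Real.cos θ)
      ≤ ∫ θ in (-π)..π, Real.exp s * Real.exp (-(2 * s / π ^ 2) * θ ^ 2) := by
    apply intervalIntegral.integral_mono_on (by linarith [pi_pos])
    · exact (Real.continuous_exp.comp (continuous_const.mul Real.continuous_cos)).intervalIntegrable _ _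
    · exact (continuous_const.mul (Real.continuous_exp.comp (continuous_const.mul (continuous_pow 2)))).intervalIntegrable _ _
    · intro θ hθ
      rw [Set.mem_Icc] at hθ
      have habs : |θ| ≤ π := abs_le.2 ⟨hθ.1, hθ.2⟩
      have hcos := Real.cos_le_one_sub_mul_cos_sq habs
      rw [← Real.exp_add]
      apply Real.exp_le_exp.2
      have h2 : s * (1 - 2 / π ^ 2 * θ ^ 2) = s + -(2 * s / π ^ 2) * θ ^ 2 := by
        field_simp; ring
      have := mul_le_mul_of_nonneg_left hcos hs.le
      linarith
  have step2 : ∫ θ in (-π)..π, Real.exp s * Real.exp (-(2 * s / π ^ 2) * θ ^ 2)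
      ≤ Real.exp s * (π * Real.sqrt (π / (2 * s))) := by
    rw [intervalIntegral.integral_const_mul]
    have hgauss : ∫ θ in (-π)..π, Real.exp (-(2 * s / π ^ 2) * θ ^ 2)
        ≤ ∫ θ : ℝ, Real.exp (-(2 * s / π ^ 2) * θ ^ 2) := by
      rw [intervalIntegral.integral_of_le (by linarith [pi_pos])]
      apply setIntegral_le_integral (integrable_exp_neg_mul_sq hc)
      filter_upwards with x using (Real.exp_pos _).le
    rw [integral_gaussian] at hgauss
    have : Real.sqrt (π / (2 * s / π ^ 2)) = π * Real.sqrt (π / (2 * s)) := by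
      rw [show π / (2 * s / π ^ 2) = π ^ 2 * (π / (2 * s)) by field_simp,
        Real.sqrt_mul (by positivity), Real.sqrt_sq pi_pos.le]
    calc Real.exp s * ∫ θ in (-π)..π, Real.exp (-(2 * s / π ^ 2) * θ ^ 2)
        ≤ Real.exp s * Real.sqrt (π / (2 * s / π ^ 2)) := by
          exact mul_le_mul_of_nonneg_left hgauss (Real.exp_pos _).le
      _ = Real.exp s * (π * Real.sqrt (π / (2 * s))) := by rw [this]
  linarith

lemma re_exponent (a b : ℝ) (k : ℕ) (θ : ℝ) :
    ((a : ℂ) * Complex.exp (θ * I) + b * Complex.exp (-(θ * I)) - k * θ * I).re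
      = (a + b) * Real.cos θ := by
  simp [Complex.exp_re, Complex.add_re, Complex.sub_re, Complex.mul_re, Complex.mul_im]
  ring

lemma key_bound (a b : ℝ) (ha : 0 ≤ a) (hb : 0 ≤ b) (hs : 0 < a + b) (k : ℕ) :
    (∑' q : ℕ, a ^ (q + k) * b ^ q / ((q + k).factorial * q.factorial))
      ≤ Real.sqrt (π / (2 * (a + b))) / 2 * Real.exp (a + b) := by
  have hle : (-π : ℝ) ≤ π := by linarith [pi_pos]
  have h2pi : (0:ℝ) < 2 * π := by linarith [pi_pos]
  set S := ∑' q : ℕ, a ^ (q + k) * b ^ q / ((q + k).factorial * q.factorial) with hS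
  have hkey := key_integral a b ha hb k
  have hre : (2 * π) * S = (∫ θ in (-π)..π,
      Complex.exp (a * Complex.exp (θ * I) + b * Complex.exp (-(θ * I)) - k * θ * I)).re := by
    rw [hkey, ← Complex.ofReal_mul, Complex.ofReal_re]
  have hbound : (∫ θ in (-π)..π,
      Complex.exp (a * Complex.exp (θ * I) + b * Complex.exp (-(θ * I)) - k * θ * I)).re
      ≤ ∫ θ in (-π)..π, Real.exp ((a + b) * Real.cos θ) := by
    calc (∫ θ in (-π)..π,
        Complex.exp (a * Complex.exp (θ * I) + b * Complex.exp (-(θ * I)) - k * θ * I)).re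
        ≤ ‖∫ θ in (-π)..π,
          Complex.exp (a * Complex.exp (θ * I) + b * Complex.exp (-(θ * I)) - k * θ * I)‖ :=
          Complex.re_le_norm _
      _ = ‖∫ θ in (-π)..π,
          Complex.exp (a * Complex.exp (θ * I) + b * Complex.exp (-(θ * I)) - k * θ * I)‖ :=
          rfl
      _ ≤ |∫ θ in (-π)..π,
          ‖Complex.exp (a * Complex.exp (θ * I) + b * Complex.exp (-(θ * I)) - k * θ * I)‖| :=
          intervalIntegral.norm_integral_le_abs_integral_norm
      _ = ∫ θ in (-π)..π,
          ‖Complex.exp (a * Complex.exp (θ * I) + b * Complex.exp (-(θ * I)) - k * θ * I)‖ :=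
          abs_of_nonneg (intervalIntegral.integral_nonneg hle fun x _ => norm_nonneg _)
      _ = ∫ θ in (-π)..π, Real.exp ((a + b) * Real.cos θ) := by
          apply intervalIntegral.integral_congr
          intro θ _
          simp only
          rw [Complex.norm_exp, re_exponent]
  have hcos := integral_exp_cos_le (a + b) hs
  have hfinal : (2 * π) * S ≤ Real.exp (a + b) * (π * Real.sqrt (π / (2 * (a + b)))) :=
    (hre.le.trans hbound).trans hcos
  calc S = ((2 * π) * S) / (2 * π) := by field_simp
    _ ≤ (Real.exp (a + b) * (π * Real.sqrt (π / (2 * (a + b))))) / (2 * π) :=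
        (div_le_div_iff_of_pos_right h2pi).2 hfinal
    _ = Real.sqrt (π / (2 * (a + b))) / 2 * Real.exp (a + b) := by
        field_simp

lemma ident_term (a b z : ℝ) (ha : 0 < a) (hz : 0 < z) (hab : a * b = (z / 2) ^ 2)
    (k m : ℕ) :
    z ^ (-(k : ℤ)) * ((z / 2) ^ (2 * m + k) / ((m.factorial : ℝ) * ((m + k).factorial : ℝ)))
      = (2 * a) ^ (-(k : ℤ)) * (a ^ (m + k) * b ^ m / (((m + k).factorial : ℝ) * (m.factorial : ℝ))) := by
  rw [zpow_neg, zpow_natCast, zpow_neg, zpow_natCast, pow_add, pow_mul, ← hab, mul_pow a b,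
    pow_add a m k, mul_pow 2 a k, div_pow z 2 k]
  have h1 : z ^ k ≠ 0 := by positivity
  have h2 : a ^ k ≠ 0 := by positivity
  have h3 : ((m.factorial : ℝ)) ≠ 0 := by positivity
  have h4 : (((m + k).factorial : ℝ)) ≠ 0 := by positivity
  field_simp



open Real

/-- The modified Bessel function of the first kind of integer order `k`:
`I_k(z) = Σ_{m≥0} (z/2)^(2m+k) / (m! (m+k)!)`. -/
noncomputable def besselI (k : ℕ) (z : ℝ) : ℝ :=
  ∑' m : ℕ, (z / 2) ^ (2 * m + k) / ((m.factorial : ℝ) * ((m + k).factorial : ℝ))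

theorem besselI_upper_bound (k : ℕ) (z : ℝ) (hz : 0 < z) :
    z ^ (-(k : ℤ)) * besselI k z ≤
      Real.sqrt (Real.pi / 8) * ((k : ℝ) ^ 2 + z ^ 2) ^ (-(1 / 4 : ℝ))
        * ((k : ℝ) + Real.sqrt ((k : ℝ) ^ 2 + z ^ 2)) ^ (-(k : ℤ))
        * Real.exp (Real.sqrt ((k : ℝ) ^ 2 + z ^ 2)) := by
  set u : ℝ := (k : ℝ) ^ 2 + z ^ 2 with hu
  have hu0 : 0 < u := by positivity
  set s : ℝ := Real.sqrt u with hsdef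
  have hs0 : 0 < s := Real.sqrt_pos.2 hu0
  have hs2 : s ^ 2 = u := Real.sq_sqrt hu0.le
  have hsk : (k : ℝ) < s := by
    nlinarith [hs2, sq_nonneg ((k:ℝ) - s), hs0, hz]
  set a : ℝ := (s + k) / 2 with hadef
  set b : ℝ := (s - k) / 2 with hbdef
  have ha : 0 < a := by simp only [hadef]; positivity
  have hb : 0 ≤ b := by simp only [hbdef]; linarith
  have hab : a + b = s := by simp only [hadef, hbdef]; ring
  have habm : a * b = (z / 2) ^ 2 := by
    have h5 : a * b = (s ^ 2 - (k:ℝ) ^ 2) / 4 := by simp only [hadef, hbdef]; ring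
    rw [h5, hs2, hu]; ring
  have h2a : (k : ℝ) + s = 2 * a := by simp only [hadef]; ring
  have hbd := key_bound a b ha.le hb (by rw [hab]; exact hs0) k
  rw [hab] at hbd
  have hident : z ^ (-(k : ℤ)) * besselI k z
      = ((k : ℝ) + s) ^ (-(k : ℤ)) *
        (∑' q : ℕ, a ^ (q + k) * b ^ q / ((q + k).factorial * q.factorial)) := by
    rw [besselI, ← tsum_mul_left, ← tsum_mul_left, h2a]
    exact tsum_congr fun m => ident_term a b z ha hz habm k m
  have h44 : Real.sqrt 4 = 2 := by
    rw [show (4:ℝ) = 2 ^ 2 by norm_num, Real.sqrt_sq]; norm_num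
  have h4 : Real.sqrt s = u ^ ((1 / 4 : ℝ)) := by
    rw [hsdef, Real.sqrt_eq_rpow, Real.sqrt_eq_rpow, ← Real.rpow_mul hu0.le]
    norm_num
  have hconst : Real.sqrt (π / (2 * s)) / 2 = Real.sqrt (π / 8) * u ^ (-(1 / 4 : ℝ)) := by
    nth_rewrite 2 [← h44]
    rw [← Real.sqrt_div (by positivity : (0:ℝ) ≤ π / (2 * s)),
      show π / (2 * s) / 4 = (π / 8) / s by rw [div_div, div_div]; ring_nf,
      Real.sqrt_div (by positivity : (0:ℝ) ≤ π / 8), h4, Real.rpow_neg hu0.le, div_eq_mul_inv]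
  have hpos : (0:ℝ) ≤ ((k : ℝ) + s) ^ (-(k : ℤ)) := by positivity
  calc z ^ (-(k : ℤ)) * besselI k z
      = ((k : ℝ) + s) ^ (-(k : ℤ)) *
        (∑' q : ℕ, a ^ (q + k) * b ^ q / ((q + k).factorial * q.factorial)) := hident
    _ ≤ ((k : ℝ) + s) ^ (-(k : ℤ)) * (Real.sqrt (π / (2 * s)) / 2 * Real.exp s) :=
        mul_le_mul_of_nonneg_left hbd hpos
    _ = Real.sqrt (π / 8) * u ^ (-(1 / 4 : ℝ)) * ((k : ℝ) + s) ^ (-(k : ℤ)) * Real.exp s := by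
        rw [hconst]; ring
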